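/- arXiv:0901.4450 — 3 statements merged into one kernel-verified Lean document; each statement's English description precedes it below -/
import Mathlib

section
/- Let e = 0 and let λ, μ be l-multipartitions with the same total content. If μ ≤ λ in the order defined by cont₁(μ)+⋯+cont_m(μ) ≤ cont₁(λ)+⋯+cont_m(λ) (dominance order on Q₊) for all m = 1,…,l with equality at m = l, then μ ⊴ λ in the dominance ordering on multipartitions. -/
open scoped Classical

/-- An `l`-multipartition, encoded as a function assigning to each component
`m < l` and each row index `a` the length of that row. -/
abbrev MP (l : ℕ) := Fin l → ℕ → ℕ

/-- `lam` really is a multipartition. -/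
def IsMP {l : ℕ} (lam : MP l) : Prop :=
  (∀ m, Antitone (lam m)) ∧ ∃ N, ∀ m a, N ≤ a → lam m a = 0

/-- The size `|λ^{(m)}|` of the `m`-th component. -/
noncomputable def compSize {l : ℕ} (lam : MP l) (m : Fin l) : ℕ := ∑ᶠ a, lam m a

/-- `cont₁(λ) + ⋯ + cont_m(λ)` evaluated at the coefficient of `α_i` (`e = 0`, so
residues are the integers `k̃_c + b − a`): the number of nodes of residue `i` lying
in the first `m` components of `λ`. -/
noncomputable def contUpTo {l : ℕ} (k : Fin l → ℤ) (lam : MP l) (m : ℕ) (i : ℤ) : ℕ :=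
  Set.ncard {x : Fin l × ℕ × ℕ |
    (x.1 : ℕ) < m ∧ x.2.2 < lam x.1 x.2.1 ∧ k x.1 + x.2.2 - x.2.1 = i}

/-- The partial sums `Σ_{c<m} |λ^{(c)}| + Σ_{b ≤ c} λ^{(m)}_b` occurring in the
dominance order on multipartitions. -/
noncomputable def domSum {l : ℕ} (lam : MP l) (m : Fin l) (c : ℕ) : ℕ :=
  (∑ᶠ m' ∈ {m' : Fin l | m' < m}, compSize lam m') + ∑ b ∈ Finset.range (c + 1), lam m b

/-- Counting in a product. -/
lemma my_card_filter_prod {α β : Type*} (s : Finset α) (t : Finset β) (p : α × β → Prop)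
    [DecidablePred p] :
    ((s ×ˢ t).filter p).card = ∑ a ∈ s, (t.filter fun b => p (a, b)).card := by
  rw [Finset.card_filter, Finset.sum_product]
  exact Finset.sum_congr rfl fun a _ => (Finset.card_filter _ _).symm

/-- A downward closed (above `a0`) finset of naturals is an interval. -/
lemma my_dc_eq_Ico (A : Finset ℕ) (a0 : ℕ) (hsub : ∀ a ∈ A, a0 ≤ a)
    (hdc : ∀ a ∈ A, ∀ a', a0 ≤ a' → a' ≤ a → a' ∈ A) :
    A = Finset.Ico a0 (a0 + A.card) := by
  rcases A.eq_empty_or_nonempty with h | h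
  · simp [h]
  · obtain ⟨M, hM, hMmax⟩ : ∃ M ∈ A, ∀ a ∈ A, a ≤ M :=
      ⟨A.max' h, A.max'_mem h, fun a ha => A.le_max' a ha⟩
    have hA : A = Finset.Icc a0 M := by
      ext a
      simp only [Finset.mem_Icc]
      exact ⟨fun ha => ⟨hsub a ha, hMmax a ha⟩, fun ⟨h1, h2⟩ => hdc _ hM a h1 h2⟩
    have ha0 : a0 ≤ M := hsub _ hM
    rw [hA, Nat.card_Icc]
    ext a
    simp only [Finset.mem_Icc, Finset.mem_Ico]
    omega

/-- The set of nodes of a partition `g` (with charge `k₀`) of residue `i`,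
with row constraint `Q`, inside a `B × B` box. -/
noncomputable def N2 (B : ℕ) (k₀ : ℤ) (g : ℕ → ℕ) (Q : ℕ → Prop) (i : ℤ) : Finset (ℕ × ℕ) :=
  (Finset.range B ×ˢ Finset.range B).filter
    (fun p => Q p.1 ∧ p.2 < g p.1 ∧ k₀ + p.2 - p.1 = i)

lemma N2_sum (B : ℕ) (k₀ : ℤ) (g : ℕ → ℕ) (Q : ℕ → Prop) (hgB : ∀ a, g a < B)
    (I : Finset ℤ) (hI : ∀ a b : ℕ, a < B → b < B → k₀ + b - a ∈ I) :
    ∑ i ∈ I, (N2 B k₀ g Q i).card =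
      ∑ a ∈ Finset.range B, if Q a then g a else 0 := by
  classical
  have key : ((Finset.range B ×ˢ Finset.range B).filter
      (fun p => Q p.1 ∧ p.2 < g p.1)).card =
      ∑ i ∈ I, (N2 B k₀ g Q i).card := by
    have hmaps : ∀ p ∈ (Finset.range B ×ˢ Finset.range B).filter
        (fun p : ℕ × ℕ => Q p.1 ∧ p.2 < g p.1), k₀ + p.2 - p.1 ∈ I := by
      intro p hp
      simp only [Finset.mem_filter, Finset.mem_product, Finset.mem_range] at hp
      exact hI p.1 p.2 hp.1.1 hp.1.2
    rw [Finset.card_eq_sum_card_fiberwise hmaps]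
    refine Finset.sum_congr rfl fun i _ => ?_
    congr 1
    rw [N2, Finset.filter_filter]
    apply Finset.filter_congr
    intro p _
    tauto
  rw [← key, my_card_filter_prod]
  refine Finset.sum_congr rfl fun a ha => ?_
  by_cases hQ : Q a
  · simp only [hQ, true_and, if_true]
    have : (Finset.range B).filter (fun b => b < g a) = Finset.range (g a) := by
      ext b
      simp only [Finset.mem_filter, Finset.mem_range]
      have := hgB a
      omega
    rw [this, Finset.card_range]
  · simp [hQ]

lemma N2_diag (B : ℕ) (k₀ : ℤ) (g : ℕ → ℕ) (hg : Antitone g) (hgB : ∀ a, g a < B)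
    (c : ℕ) (i : ℤ) :
    (N2 B k₀ g (fun a => a ≤ c) i).card =
      min ((N2 B k₀ g (fun _ => True) i).card) (c + 1 - (k₀ - i).toNat) := by
  classical
  set a0 : ℕ := (k₀ - i).toNat with ha0
  set bmap : ℕ → ℕ := fun a => ((a : ℤ) + i - k₀).toNat with hbmap
  have ha0le : (k₀ - i) ≤ (a0 : ℤ) := Int.self_le_toNat _
  have hb : ∀ a : ℕ, a0 ≤ a → (bmap a : ℤ) = (a : ℤ) + i - k₀ := by
    intro a ha
    have : (0 : ℤ) ≤ (a : ℤ) + i - k₀ := by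
      have : (a0 : ℤ) ≤ a := by exact_mod_cast ha
      omega
    exact Int.toNat_of_nonneg this
  set A : Finset ℕ := (Finset.range B).filter (fun a => a0 ≤ a ∧ bmap a < g a) with hA
  -- the generic bijection between row-constrained diagonal nodes and rows
  have cardQ : ∀ Q : ℕ → Prop,
      (N2 B k₀ g Q i).card = (A.filter Q).card := by
    intro Q
    symm
    apply Finset.card_bij (fun a _ => (a, bmap a))
    · intro a ha
      simp only [Finset.mem_filter, Finset.mem_range, hA] at ha
      obtain ⟨⟨haB, ha0a, hblt⟩, hQ⟩ := ha
      simp only [N2, Finset.mem_filter, Finset.mem_product, Finset.mem_range]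
      refine ⟨⟨haB, lt_trans hblt (hgB a)⟩, hQ, hblt, ?_⟩
      have := hb a ha0a
      omega
    · intro a1 h1 a2 h2 heq
      exact congrArg Prod.fst heq
    · intro p hp
      simp only [N2, Finset.mem_filter, Finset.mem_product, Finset.mem_range] at hp
      obtain ⟨⟨hp1, hp2⟩, hQ, hlt, hcont⟩ := hp
      have ha0p : a0 ≤ p.1 := by
        rw [ha0, Int.toNat_le]
        omega
      have hbp : bmap p.1 = p.2 := by
        have := hb p.1 ha0p
        omega
      refine ⟨p.1, ?_, ?_⟩
      · simp only [Finset.mem_filter, Finset.mem_range, hA]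
        exact ⟨⟨hp1, ha0p, by rw [hbp]; exact hlt⟩, hQ⟩
      · rw [hbp]
  have hAIco : A = Finset.Ico a0 (a0 + A.card) := by
    apply my_dc_eq_Ico
    · intro a ha
      simp only [Finset.mem_filter, hA] at ha
      exact ha.2.1
    · intro a ha a' h1 h2
      simp only [Finset.mem_filter, Finset.mem_range, hA] at ha ⊢
      obtain ⟨haB, ha0a, hblt⟩ := ha
      refine ⟨lt_of_le_of_lt h2 haB, h1, ?_⟩
      have hba := hb a ha0a
      have hba' := hb a' h1
      have hbb : bmap a' ≤ bmap a := by omega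
      exact lt_of_le_of_lt hbb (lt_of_lt_of_le hblt (hg h2))
  have hfc : (A.filter (fun a => a ≤ c)).card = min A.card (c + 1 - a0) := by
    conv_lhs => rw [hAIco]
    have heq : (Finset.Ico a0 (a0 + A.card)).filter (fun a => a ≤ c) =
        Finset.Ico a0 (min (a0 + A.card) (c + 1)) := by
      ext a
      simp only [Finset.mem_filter, Finset.mem_Ico]
      omega
    rw [heq, Nat.card_Ico]
    omega
  have hAcard : (N2 B k₀ g (fun _ => True) i).card = A.card := by
    rw [cardQ]
    congr 1
    simp
  rw [cardQ, hAcard]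
  convert hfc using 2
  exact Finset.filter_congr_decidable ..

lemma contUpTo_eq_sum (l : ℕ) (k : Fin l → ℤ) (B : ℕ) (f : MP l)
    (hB0 : ∀ m a, B ≤ a → f m a = 0) (hB : ∀ m a, f m a < B) (m : ℕ) (i : ℤ) :
    contUpTo k f m i = ∑ m' : Fin l, if (m' : ℕ) < m then
      (N2 B (k m') (f m') (fun _ => True) i).card else 0 := by
  classical
  have hset : {x : Fin l × ℕ × ℕ | (x.1:ℕ) < m ∧ x.2.2 < f x.1 x.2.1 ∧ k x.1 + x.2.2 - x.2.1 = i}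
      = ↑(((Finset.univ : Finset (Fin l)) ×ˢ Finset.range B ×ˢ Finset.range B).filter
        (fun x => (x.1:ℕ) < m ∧ x.2.2 < f x.1 x.2.1 ∧ k x.1 + x.2.2 - x.2.1 = i)) := by
    ext x
    simp only [Set.mem_setOf_eq, Finset.coe_filter, Finset.mem_product, Finset.mem_univ,
      Finset.mem_range, true_and]
    constructor
    · rintro ⟨h1, h2, h3⟩
      have hx1 : x.2.1 < B := by
        by_contra hc
        have := hB0 x.1 x.2.1 (le_of_not_gt hc)
        omega
      exact ⟨⟨hx1, lt_trans h2 (hB x.1 x.2.1)⟩, h1, h2, h3⟩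
    · tauto
  rw [contUpTo, hset, Set.ncard_coe_finset, my_card_filter_prod]
  refine Finset.sum_congr rfl fun m' _ => ?_
  by_cases h : (m' : ℕ) < m
  · rw [if_pos h]
    congr 1
    rw [N2]
    ext p
    simp [h]
  · rw [if_neg h, Finset.card_eq_zero]
    apply Finset.filter_false_of_mem
    intro p _
    simp [h]

lemma sum_if_lt_succ (l : ℕ) (m : Fin l) (g : Fin l → ℕ) :
    (∑ m' : Fin l, if (m' : ℕ) < (m : ℕ) + 1 then g m' else 0)
      = (∑ m' : Fin l, if (m' : ℕ) < (m : ℕ) then g m' else 0) + g m := by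
  have key : ∀ m' : Fin l, (if (m' : ℕ) < (m : ℕ) + 1 then g m' else 0)
      = (if (m' : ℕ) < (m : ℕ) then g m' else 0) + (if m' = m then g m' else 0) := by
    intro m'
    rcases eq_or_ne m' m with rfl | hne
    · simp
    · have hv : (m' : ℕ) ≠ (m : ℕ) := fun h => hne (Fin.ext h)
      have hiff : ((m' : ℕ) < (m : ℕ) + 1) ↔ ((m' : ℕ) < (m : ℕ)) := by omega
      simp [hiff, hne]
  rw [Finset.sum_congr rfl (fun m' _ => key m'), Finset.sum_add_distrib,
    Finset.sum_ite_eq' Finset.univ m g]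
  simp

lemma sum_rows (B c : ℕ) (g : ℕ → ℕ) (hB0 : ∀ a, B ≤ a → g a = 0) :
    (∑ a ∈ Finset.range B, if a ≤ c then g a else 0) = ∑ a ∈ Finset.range (c + 1), g a := by
  have h1 : (∑ a ∈ Finset.range B, if a ≤ c then g a else 0)
      = ∑ a ∈ Finset.range (max B (c + 1)), if a ≤ c then g a else 0 := by
    apply Finset.sum_subset (Finset.range_subset_range.mpr (le_max_left _ _))
    intro a ha hna
    simp only [Finset.mem_range] at ha hna
    rw [hB0 a (by omega)]
    simp
  have h2 : (∑ a ∈ Finset.range (c + 1), g a)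
      = ∑ a ∈ Finset.range (max B (c + 1)), if a ≤ c then g a else 0 := by
    rw [show (∑ a ∈ Finset.range (c + 1), g a)
        = ∑ a ∈ Finset.range (c + 1), if a ≤ c then g a else 0 from
      Finset.sum_congr rfl fun a ha => by
        simp only [Finset.mem_range] at ha
        rw [if_pos (by omega)]]
    apply Finset.sum_subset (Finset.range_subset_range.mpr (le_max_right _ _))
    intro a ha hna
    simp only [Finset.mem_range] at ha hna
    rw [if_neg (by omega)]
  rw [h1, ← h2]

lemma compSize_eq (l : ℕ) (B : ℕ) (f : MP l) (hB0 : ∀ m a, B ≤ a → f m a = 0) (m' : Fin l) :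
    compSize f m' = ∑ a ∈ Finset.range B, f m' a := by
  rw [compSize]
  apply finsum_eq_sum_of_support_subset
  intro a ha
  simp only [Function.mem_support] at ha
  simp only [Finset.coe_range, Set.mem_Iio]
  by_contra hc
  exact ha (hB0 m' a (le_of_not_gt hc))

lemma domSum_eq (l : ℕ) (k : Fin l → ℤ) (B : ℕ) (f : MP l)
    (hanti : ∀ m, Antitone (f m)) (hB0 : ∀ m a, B ≤ a → f m a = 0) (hB : ∀ m a, f m a < B)
    (I : Finset ℤ) (hI : ∀ (m' : Fin l) (a b : ℕ), a < B → b < B → k m' + b - a ∈ I)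
    (m : Fin l) (c : ℕ) :
    domSum f m c = ∑ i ∈ I, min (contUpTo k f ((m : ℕ) + 1) i)
      (contUpTo k f (m : ℕ) i + (c + 1 - (k m - i).toNat)) := by
  classical
  have hL : domSum f m c
      = (∑ m' : Fin l, if (m' : ℕ) < (m : ℕ) then ∑ a ∈ Finset.range B, f m' a else 0)
        + ∑ a ∈ Finset.range B, if a ≤ c then f m a else 0 := by
    rw [domSum, sum_rows B c (f m) (hB0 m)]
    congr 1
    have hset : {m' : Fin l | m' < m}
        = ↑(Finset.univ.filter (fun m' : Fin l => m' < m)) := by ext; simp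
    rw [hset, finsum_mem_coe_finset, Finset.sum_filter]
    refine Finset.sum_congr rfl fun m' _ => ?_
    by_cases h : m' < m
    · rw [if_pos h, if_pos (Fin.lt_def.mp h), compSize_eq l B f hB0 m']
    · rw [if_neg h, if_neg (fun hc => h (Fin.lt_def.mpr hc))]
  have hR : ∀ i ∈ I, min (contUpTo k f ((m : ℕ) + 1) i)
      (contUpTo k f (m : ℕ) i + (c + 1 - (k m - i).toNat))
      = (∑ m' : Fin l, if (m' : ℕ) < (m : ℕ) then
          (N2 B (k m') (f m') (fun _ => True) i).card else 0)
        + (N2 B (k m) (f m) (fun a => a ≤ c) i).card := by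
    intro i _
    rw [contUpTo_eq_sum l k B f hB0 hB ((m : ℕ) + 1) i,
      contUpTo_eq_sum l k B f hB0 hB (m : ℕ) i,
      sum_if_lt_succ l m (fun m' => (N2 B (k m') (f m') (fun _ => True) i).card),
      N2_diag B (k m) (f m) (hanti m) (hB m) c i]
    omega
  rw [hL, Finset.sum_congr rfl hR, Finset.sum_add_distrib]
  congr 1
  · rw [Finset.sum_comm]
    refine Finset.sum_congr rfl fun m' _ => ?_
    by_cases h : (m' : ℕ) < (m : ℕ)
    · simp only [if_pos h]
      rw [N2_sum B (k m') (f m') (fun _ => True) (hB m') I (hI m')]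
      simp
    · simp [h]
  · rw [N2_sum B (k m) (f m) (fun a => a ≤ c) (hB m) I (hI m)]
    congr!

lemma total_eq (l : ℕ) (k : Fin l → ℤ) (B : ℕ) (f : MP l)
    (hB0 : ∀ m a, B ≤ a → f m a = 0) (hB : ∀ m a, f m a < B)
    (I : Finset ℤ) (hI : ∀ (m' : Fin l) (a b : ℕ), a < B → b < B → k m' + b - a ∈ I) :
    ∑ᶠ m' : Fin l, compSize f m' = ∑ i ∈ I, contUpTo k f l i := by
  classical
  rw [finsum_eq_sum_of_fintype]
  calc ∑ m' : Fin l, compSize f m'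
      = ∑ m' : Fin l, ∑ a ∈ Finset.range B, f m' a :=
        Finset.sum_congr rfl fun m' _ => compSize_eq l B f hB0 m'
    _ = ∑ m' : Fin l, ∑ i ∈ I, (N2 B (k m') (f m') (fun _ => True) i).card :=
        Finset.sum_congr rfl fun m' _ =>
          ((N2_sum B (k m') (f m') (fun _ => True) (hB m') I (hI m')).trans (by simp)).symm
    _ = ∑ i ∈ I, ∑ m' : Fin l, (N2 B (k m') (f m') (fun _ => True) i).card := Finset.sum_comm
    _ = ∑ i ∈ I, contUpTo k f l i := by
        refine Finset.sum_congr rfl fun i _ => ?_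
        rw [contUpTo_eq_sum l k B f hB0 hB l i]
        exact Finset.sum_congr rfl fun m' _ => (if_pos m'.isLt).symm

/-- let `e = 0` and let `λ, μ` be `l`-multipartitions with the same
total content.  If `μ ≤ λ` in the order defined by
`cont₁(μ)+⋯+cont_m(μ) ≤ cont₁(λ)+⋯+cont_m(λ)` (dominance on `Q₊`, i.e. pointwise)
for all `m = 1,…,l`, with equality at `m = l`, then `μ ⊴ λ` in the dominance order
on multipartitions. -/
theorem content_order_implies_dominance
    (l : ℕ) (k : Fin l → ℤ) (lam mu : MP l)
    (hlam : IsMP lam) (hmu : IsMP mu)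
    (hle : ∀ m : ℕ, m ≤ l → ∀ i : ℤ, contUpTo k mu m i ≤ contUpTo k lam m i)
    (heq : ∀ i : ℤ, contUpTo k mu l i = contUpTo k lam l i) :
    (∀ (m : Fin l) (c : ℕ), domSum mu m c ≤ domSum lam m c)
      ∧ (∑ᶠ m' : Fin l, compSize mu m') = ∑ᶠ m' : Fin l, compSize lam m' := by
  classical
  obtain ⟨hlanti, N1, hN1⟩ := hlam
  obtain ⟨hmanti, N2', hN2⟩ := hmu
  set B : ℕ := N1 + N2' + (∑ m' : Fin l, (lam m' 0 + mu m' 0)) + 1 with hBdef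
  have hBlam0 : ∀ m a, B ≤ a → lam m a = 0 := fun m a ha => hN1 m a (by omega)
  have hBmu0 : ∀ m a, B ≤ a → mu m a = 0 := fun m a ha => hN2 m a (by omega)
  have hsingle : ∀ m : Fin l, lam m 0 + mu m 0 ≤ ∑ m' : Fin l, (lam m' 0 + mu m' 0) :=
    fun m => Finset.single_le_sum (f := fun m' => lam m' 0 + mu m' 0)
      (fun _ _ => Nat.zero_le _) (Finset.mem_univ m)
  have hBlam : ∀ m a, lam m a < B := by
    intro m a
    have h1 : lam m a ≤ lam m 0 := hlanti m (Nat.zero_le a)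
    have := hsingle m
    omega
  have hBmu : ∀ m a, mu m a < B := by
    intro m a
    have h1 : mu m a ≤ mu m 0 := hmanti m (Nat.zero_le a)
    have := hsingle m
    omega
  set I : Finset ℤ :=
    Finset.univ.biUnion (fun m' : Fin l => Finset.Icc (k m' - B) (k m' + B)) with hIdef
  have hI : ∀ (m' : Fin l) (a b : ℕ), a < B → b < B → k m' + b - a ∈ I := by
    intro m' a b ha hb
    apply Finset.mem_biUnion.mpr
    refine ⟨m', Finset.mem_univ _, ?_⟩
    rw [Finset.mem_Icc]
    have ha' : (a : ℤ) < B := by exact_mod_cast ha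
    have hb' : (b : ℤ) < B := by exact_mod_cast hb
    omega
  constructor
  · intro m c
    rw [domSum_eq l k B lam hlanti hBlam0 hBlam I hI m c,
        domSum_eq l k B mu hmanti hBmu0 hBmu I hI m c]
    apply Finset.sum_le_sum
    intro i _
    have h1 := hle ((m : ℕ) + 1) m.isLt i
    have h2 := hle (m : ℕ) (le_of_lt m.isLt) i
    omega
  · rw [total_eq l k B mu hBmu0 hBmu I hI, total_eq l k B lam hBlam0 hBlam I hI]
    exact Finset.sum_congr rfl fun i _ => heq i
end

section
/- Let e > 0 and suppose the multicharge satisfies k̃_m − k̃_{m+1} ≥ ht(α) + e for m = 1,…,l−1. Then for all l-multipartitions λ, μ of content α, μ > λ in Uglov's order (defined via dominance of the associated partitions under the inverse (l,e)-quotient map) implies μ <_lex λ in the lexicographic order on multipartitions. -/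
open scoped Classical

/-- The total number of nodes `|λ|`. -/
noncomputable def totalSize {l : ℕ} (lam : MP l) : ℕ := ∑ᶠ m, ∑ᶠ a, lam m a

/-- The number of nodes of `λ` of residue `i ∈ ℤ/eℤ` (node `(m,a,b)` has residue
`k̃_m + b − a`). -/
noncomputable def resCont (e : ℕ) {l : ℕ} (k : Fin l → ℤ) (lam : MP l) (i : ZMod e) : ℕ :=
  Set.ncard {x : Fin l × ℕ × ℕ |
    x.2.2 < lam x.1 x.2.1 ∧ ((k x.1 + x.2.2 - x.2.1 : ℤ) : ZMod e) = i}

/-- Uglov's reindexing of the abacus: the position in row `m` (0-indexed) and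
column `n ∈ ℤ` is reindexed by the integer `e·l·s + e·m + t`, where `n = e·s + t`
with `1 ≤ t ≤ e`. -/
def uglovIdx (e l : ℕ) (m : Fin l) (n : ℤ) : ℤ :=
  (e : ℤ) * l * ((n - 1) / (e : ℤ)) + (e : ℤ) * m.1 + ((n - 1) % (e : ℤ)) + 1

/-- The set of Uglov indices of the beads of the abacus display `A(λ)`: the bead
positions in row `m` are the columns `k̃_m + λ^{(m)}_a − a` for `a = 0, 1, 2, …`
(0-indexed rows). -/
def beads (e l : ℕ) (k : Fin l → ℤ) (lam : MP l) : Set ℤ :=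
  {u | ∃ (m : Fin l) (a : ℕ), u = uglovIdx e l m (k m + lam m a - a)}

/-- `lbar` is the partition `λ̄` associated to `λ` by the inverse of Uglov's
`(l,e)`-quotient map: the beads of `A(λ)` occupy exactly the positions indexed by
the beta-numbers `k̃₁ + ⋯ + k̃_l + λ̄_b − b` for `b = 0, 1, 2, …`. -/
def IsUglovBar (e l : ℕ) (k : Fin l → ℤ) (lam : MP l) (lbar : ℕ → ℕ) : Prop :=
  Antitone lbar ∧ (∃ N, ∀ b, N ≤ b → lbar b = 0) ∧
    beads e l k lam = Set.range fun b : ℕ => (∑ m, k m) + lbar b - b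

/-- The dominance order `μ̄ ⊴ λ̄` on partitions (encoded as eventually-zero
antitone functions `ℕ → ℕ`). -/
def PtnDom (mbar lbar : ℕ → ℕ) : Prop :=
  (∀ c : ℕ, ∑ b ∈ Finset.range (c + 1), mbar b ≤ ∑ b ∈ Finset.range (c + 1), lbar b)
    ∧ (∑ᶠ b, mbar b) = ∑ᶠ b, lbar b

/-- The lexicographic order on partitions: `f <_lex g`. -/
def PtnLexLt (f g : ℕ → ℕ) : Prop :=
  ∃ a : ℕ, (∀ b < a, f b = g b) ∧ f a < g a

/-- The lexicographic order on `l`-multipartitions: `μ <_lex λ`. -/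
def MPLexLt {l : ℕ} (mu lam : MP l) : Prop :=
  ∃ m : Fin l, (∀ m' < m, mu m' = lam m') ∧ PtnLexLt (mu m) (lam m)

section Aux

variable {e l : ℕ}

lemma uglov_mono (he : 0 < e) (m : Fin l) {n n' : ℤ} (h : n < n') :
    uglovIdx e l m n < uglovIdx e l m n' := by
  have hl : 0 < l := m.pos
  have he' : (0:ℤ) < e := by exact_mod_cast he
  have hl' : (1:ℤ) ≤ l := by exact_mod_cast hl
  set s1 := (n - 1) / (e:ℤ) with hs1
  set s2 := (n' - 1) / (e:ℤ) with hs2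
  set r1 := (n - 1) % (e:ℤ) with hr1
  set r2 := (n' - 1) % (e:ℤ) with hr2
  have e1 : (e:ℤ) * s1 + r1 = n - 1 := Int.mul_ediv_add_emod _ _
  have e2 : (e:ℤ) * s2 + r2 = n' - 1 := Int.mul_ediv_add_emod _ _
  have b1 : 0 ≤ r1 := Int.emod_nonneg _ (ne_of_gt he')
  have b2 : r1 < e := Int.emod_lt_of_pos _ he'
  have b3 : 0 ≤ r2 := Int.emod_nonneg _ (ne_of_gt he')
  have b4 : r2 < e := Int.emod_lt_of_pos _ he'
  have hdiv : s1 ≤ s2 := Int.ediv_le_ediv he' (by linarith)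
  unfold uglovIdx
  rw [← hs1, ← hs2, ← hr1, ← hr2]
  rcases eq_or_lt_of_le hdiv with hd | hd
  · rw [← hd]; nlinarith
  · have h1 : s1 + 1 ≤ s2 := hd
    have h2 : (e:ℤ) * l * (s1 + 1) ≤ (e:ℤ) * l * s2 :=
      mul_le_mul_of_nonneg_left h1 (by positivity)
    have h3 : (e:ℤ) * 1 ≤ (e:ℤ) * l :=
      mul_le_mul_of_nonneg_left hl' (by positivity)
    nlinarith

lemma uglov_inj (he : 0 < e) {m m' : Fin l} {n n' : ℤ}
    (h : uglovIdx e l m n = uglovIdx e l m' n') : m = m' ∧ n = n' := by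
  have he' : (0:ℤ) < e := by exact_mod_cast he
  have hm1 : (m.1:ℤ) ≤ l - 1 := by
    have := m.2; push_cast; omega
  have hm1' : (m'.1:ℤ) ≤ l - 1 := by
    have := m'.2; push_cast; omega
  have hm0 : (0:ℤ) ≤ (m.1:ℤ) := by positivity
  have hm0' : (0:ℤ) ≤ (m'.1:ℤ) := by positivity
  set s1 := (n - 1) / (e:ℤ) with hs1
  set s2 := (n' - 1) / (e:ℤ) with hs2
  set r1 := (n - 1) % (e:ℤ) with hr1
  set r2 := (n' - 1) % (e:ℤ) with hr2
  have e1 : (e:ℤ) * s1 + r1 = n - 1 := Int.mul_ediv_add_emod _ _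
  have e2 : (e:ℤ) * s2 + r2 = n' - 1 := Int.mul_ediv_add_emod _ _
  have b1 : 0 ≤ r1 := Int.emod_nonneg _ (ne_of_gt he')
  have b2 : r1 < e := Int.emod_lt_of_pos _ he'
  have b3 : 0 ≤ r2 := Int.emod_nonneg _ (ne_of_gt he')
  have b4 : r2 < e := Int.emod_lt_of_pos _ he'
  unfold uglovIdx at h
  rw [← hs1, ← hs2, ← hr1, ← hr2] at h
  have hEm : (e:ℤ) * m.1 ≤ e * (l-1) := by nlinarith
  have hEm' : (e:ℤ) * m'.1 ≤ e * (l-1) := by nlinarith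
  have hss : s1 = s2 := by
    rcases lt_trichotomy s1 s2 with hc | hc | hc
    · exfalso
      have hc' : s1 + 1 ≤ s2 := hc
      have : (e:ℤ) * l * (s1 + 1) ≤ (e:ℤ) * l * s2 :=
        mul_le_mul_of_nonneg_left hc' (by positivity)
      nlinarith
    · exact hc
    · exfalso
      have hc' : s2 + 1 ≤ s1 := hc
      have : (e:ℤ) * l * (s2 + 1) ≤ (e:ℤ) * l * s1 :=
        mul_le_mul_of_nonneg_left hc' (by positivity)
      nlinarith
  rw [hss] at h
  have hmm : (m.1:ℤ) = m'.1 := by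
    rcases lt_trichotomy (m.1:ℤ) m'.1 with hc | hc | hc
    · exfalso
      have : (e:ℤ) * m.1 + e ≤ (e:ℤ) * m'.1 := by nlinarith
      linarith
    · exact hc
    · exfalso
      have : (e:ℤ) * m'.1 + e ≤ (e:ℤ) * m.1 := by nlinarith
      linarith
  have hmeq : m = m' := Fin.ext (by exact_mod_cast hmm)
  refine ⟨hmeq, ?_⟩
  rw [hmm] at h
  have hrr : r1 = r2 := by linarith
  have : n - 1 = n' - 1 := by rw [← e1, ← e2, hss, hrr]
  linarith

lemma uglov_block_mono (he : 0 < e) {m m' : Fin l} (hm : m.1 < m'.1)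
    {n n' : ℤ} (h : uglovIdx e l m n < uglovIdx e l m' n') :
    (n - 1) / (e:ℤ) ≤ (n' - 1) / (e:ℤ) := by
  have he' : (0:ℤ) < e := by exact_mod_cast he
  have hm1' : (m'.1:ℤ) ≤ l - 1 := by
    have := m'.2; push_cast; omega
  have hm0 : (0:ℤ) ≤ (m.1:ℤ) := by positivity
  by_contra hc
  push_neg at hc
  set s1 := (n - 1) / (e:ℤ) with hs1
  set s2 := (n' - 1) / (e:ℤ) with hs2
  set r1 := (n - 1) % (e:ℤ) with hr1
  set r2 := (n' - 1) % (e:ℤ) with hr2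
  have b1 : 0 ≤ r1 := Int.emod_nonneg _ (ne_of_gt he')
  have b2 : r1 < e := Int.emod_lt_of_pos _ he'
  have b3 : 0 ≤ r2 := Int.emod_nonneg _ (ne_of_gt he')
  have b4 : r2 < e := Int.emod_lt_of_pos _ he'
  unfold uglovIdx at h
  rw [← hs1, ← hs2, ← hr1, ← hr2] at h
  have h1 : s2 + 1 ≤ s1 := hc
  have h2 : (e:ℤ) * l * (s2 + 1) ≤ (e:ℤ) * l * s1 :=
    mul_le_mul_of_nonneg_left h1 (by positivity)
  have hEm' : (e:ℤ) * m'.1 ≤ e * (l-1) :=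
    mul_le_mul_of_nonneg_left hm1' (by positivity)
  nlinarith

lemma col_anti_le {p : ℕ → ℕ} (hp : Antitone p) {a a' : ℕ} (h : a ≤ a') :
    (p a' : ℤ) - a' ≤ (p a : ℤ) - a := by
  have h2 : p a' ≤ p a := hp h
  omega

lemma col_anti_lt {p : ℕ → ℕ} (hp : Antitone p) {a a' : ℕ} (h : a < a') :
    (p a' : ℤ) - a' < (p a : ℤ) - a := by
  have h2 : p a' ≤ p a := hp h.le
  omega

end Aux


section Aux2

lemma mp_trichotomy {l : ℕ} (mu lam : MP l) (h : mu ≠ lam) :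
    MPLexLt mu lam ∨ MPLexLt lam mu := by
  have hex : ∃ j : ℕ, ∃ hj : j < l, mu ⟨j, hj⟩ ≠ lam ⟨j, hj⟩ := by
    by_contra hc
    push_neg at hc
    exact h (funext fun m => hc m.1 m.2)
  obtain ⟨hj₀l, hne₀⟩ := Nat.find_spec hex
  set j₀ := Nat.find hex with hj₀
  set m₀ : Fin l := ⟨j₀, hj₀l⟩ with hm₀
  have hpre : ∀ m' : Fin l, m' < m₀ → mu m' = lam m' := by
    intro m' hm'
    by_contra hc
    exact Nat.find_min hex (show m'.1 < j₀ from hm') ⟨m'.2, hc⟩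
  have hex2 : ∃ a, mu m₀ a ≠ lam m₀ a := by
    by_contra hc
    push_neg at hc
    exact hne₀ (funext hc)
  have ha₀ := Nat.find_spec hex2
  set a₀ := Nat.find hex2 with ha₀def
  have heqa : ∀ b < a₀, mu m₀ b = lam m₀ b := fun b hb =>
    not_ne_iff.mp (Nat.find_min hex2 hb)
  rcases Nat.lt_or_ge (mu m₀ a₀) (lam m₀ a₀) with hlt | hge
  · exact Or.inl ⟨m₀, hpre, a₀, heqa, hlt⟩
  · have hlt' : lam m₀ a₀ < mu m₀ a₀ := lt_of_le_of_ne hge fun hh => ha₀ hh.symm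
    exact Or.inr ⟨m₀, fun m' h' => (hpre m' h').symm, a₀,
      fun b hb => (heqa b hb).symm, hlt'⟩

lemma gap_tele_aux {l : ℕ} (k : Fin l → ℤ) (C : ℤ) (hC : 0 ≤ C)
    (hgap : ∀ (m : ℕ) (h : m + 1 < l),
      C ≤ k ⟨m, Nat.lt_of_succ_lt h⟩ - k ⟨m + 1, h⟩)
    (m₀ : Fin l) : ∀ (j : ℕ) (hj : j < l), m₀.1 < j → C ≤ k m₀ - k ⟨j, hj⟩ := by
  intro j
  induction j with
  | zero => intro hj h; omega
  | succ i ih =>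
    intro hj h
    rcases Nat.lt_or_ge m₀.1 i with hc | hc
    · have h1 := ih (Nat.lt_of_succ_lt hj) hc
      have h2 := hgap i hj
      linarith
    · have hi : m₀.1 = i := by omega
      have hm₀ : m₀ = ⟨i, Nat.lt_of_succ_lt hj⟩ := Fin.ext hi
      rw [hm₀]
      exact hgap i hj

lemma gap_tele {l : ℕ} (k : Fin l → ℤ) (C : ℤ) (hC : 0 ≤ C)
    (hgap : ∀ (m : ℕ) (h : m + 1 < l),
      C ≤ k ⟨m, Nat.lt_of_succ_lt h⟩ - k ⟨m + 1, h⟩)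
    {m₀ m₁ : Fin l} (h : m₀.1 < m₁.1) : C ≤ k m₀ - k m₁ := by
  have := gap_tele_aux k C hC hgap m₀ m₁.1 m₁.2 h
  simpa using this

lemma size_lb {l : ℕ} (lam : MP l) (hlam : IsMP lam) {m₀ m₁ : Fin l} (hne : m₀ ≠ m₁)
    (a₀ : ℕ) (h1 : ∀ a < a₀, 1 ≤ lam m₀ a) : lam m₁ 0 + a₀ ≤ totalSize lam := by
  obtain ⟨Nb, hNb⟩ := hlam.2
  set M := Nb + a₀ + 1 with hM
  have hsupp : ∀ m : Fin l, Function.support (lam m) ⊆ ↑(Finset.range M) := by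
    intro m a ha
    simp only [Finset.coe_range, Set.mem_Iio]
    by_contra hc
    push_neg at hc
    exact ha (hNb m a (by omega))
  have htot : totalSize lam = ∑ m : Fin l, ∑ a ∈ Finset.range M, lam m a := by
    unfold totalSize
    rw [finsum_eq_sum_of_fintype]
    exact Finset.sum_congr rfl fun m _ =>
      finsum_eq_finset_sum_of_support_subset _ (hsupp m)
  have hF₁ : lam m₁ 0 ≤ ∑ a ∈ Finset.range M, lam m₁ a :=
    Finset.single_le_sum (fun i _ => Nat.zero_le _) (Finset.mem_range.mpr (by omega))
  have hF₀ : a₀ ≤ ∑ a ∈ Finset.range M, lam m₀ a := by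
    calc a₀ = ∑ _a ∈ Finset.range a₀, 1 := by simp
    _ ≤ ∑ a ∈ Finset.range a₀, lam m₀ a :=
        Finset.sum_le_sum fun i hi => h1 i (Finset.mem_range.mp hi)
    _ ≤ ∑ a ∈ Finset.range M, lam m₀ a :=
        Finset.sum_le_sum_of_subset (Finset.range_subset_range.mpr (by omega))
  have hpair : (∑ a ∈ Finset.range M, lam m₀ a) + ∑ a ∈ Finset.range M, lam m₁ a
      ≤ totalSize lam := by
    have hsub := Finset.sum_le_sum_of_subset
      (f := fun m => ∑ a ∈ Finset.range M, lam m a)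
      (Finset.subset_univ ({m₀, m₁} : Finset (Fin l)))
    rw [Finset.sum_pair hne] at hsub
    rw [htot]
    exact hsub
  omega

lemma dom_contra {K : ℤ} {lbar mbar : ℕ → ℕ}
    (hl : Antitone lbar) (hm : Antitone mbar)
    (hdom1 : ∀ c : ℕ, ∑ b ∈ Finset.range (c + 1), mbar b ≤ ∑ b ∈ Finset.range (c + 1), lbar b)
    {w : ℤ}
    (hw : ∃ c : ℕ, K + mbar c - c = w)
    (hw' : ∀ b : ℕ, K + lbar b - b ≠ w)
    (hagree : ∀ b : ℕ, w < K + (lbar b : ℤ) - b →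
      ∃ b', K + (mbar b' : ℤ) - b' = K + lbar b - b) : False := by
  classical
  obtain ⟨c, hc⟩ := hw
  set f : ℕ → ℤ := fun b => K + lbar b - b with hf
  set g : ℕ → ℤ := fun b => K + mbar b - b with hg
  have hfanti : ∀ {b b' : ℕ}, b ≤ b' → f b' ≤ f b := by
    intro b b' hb
    have := hl hb
    simp only [hf]
    omega
  have hganti : ∀ {b b' : ℕ}, b ≤ b' → g b' ≤ g b := by
    intro b b' hb
    have := hm hb
    simp only [hg]
    omega
  have hfstrict : ∀ {b b' : ℕ}, b < b' → f b' < f b := by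
    intro b b' hb
    have := hl hb.le
    simp only [hf]
    omega
  have hgstrict : ∀ {b b' : ℕ}, b < b' → g b' < g b := by
    intro b b' hb
    have := hm hb.le
    simp only [hg]
    omega
  have hkey : ∀ b ≤ c, f b ≤ g b := by
    intro b hb
    by_contra hgt
    push_neg at hgt
    have hchoice : ∀ i, i ≤ b → ∃ x, g x = f i ∧ x < b := by
      intro i hi
      have h1 : g b < f i := lt_of_lt_of_le hgt (hfanti hi)
      have h2 : w < f i := by
        have hgc : g c = w := hc
        have : g c ≤ g b := hganti hb
        linarith
      obtain ⟨x, hx⟩ := hagree i h2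
      have hx' : g x = f i := hx
      refine ⟨x, hx', ?_⟩
      by_contra hxb
      push_neg at hxb
      have : g x ≤ g b := hganti hxb
      linarith
    set X : ℕ → ℕ := fun i => if h : i ≤ b then (hchoice i h).choose else 0 with hX
    have hX1 : ∀ i, i ≤ b → g (X i) = f i := by
      intro i hi
      simp only [hX, dif_pos hi]
      exact (hchoice i hi).choose_spec.1
    have hX2 : ∀ i, i ≤ b → X i < b := by
      intro i hi
      simp only [hX, dif_pos hi]
      exact (hchoice i hi).choose_spec.2
    have hcard : (Finset.range (b + 1)).card ≤ (Finset.range b).card := by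
      apply Finset.card_le_card_of_injOn X
      · intro i hi
        rw [Finset.mem_coe, Finset.mem_range] at hi ⊢
        exact hX2 i (by omega)
      · intro i hi j hj hij
        simp only [Finset.coe_range, Set.mem_Iio] at hi hj
        have h1 : g (X i) = f i := hX1 i (by omega)
        have h2 : g (X j) = f j := hX1 j (by omega)
        have : f i = f j := by rw [← h1, ← h2, hij]
        by_contra hne
        rcases Nat.lt_or_ge i j with hc' | hc'
        · have := hfstrict hc'; omega
        · have hc'' : j < i := by omega
          have := hfstrict hc''; omega
    rw [Finset.card_range, Finset.card_range] at hcard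
    omega
  have hfc : f c < g c := by
    have hgc : g c = w := hc
    refine lt_of_le_of_ne (hkey c le_rfl) ?_
    rw [hgc]
    exact hw' c
  have hpt : ∀ b ∈ Finset.range (c + 1), lbar b ≤ mbar b := by
    intro b hb
    rw [Finset.mem_range] at hb
    have := hkey b (by omega)
    simp only [hf, hg] at this
    omega
  have hstrict : lbar c < mbar c := by
    simp only [hf, hg] at hfc
    omega
  have hsum : ∑ b ∈ Finset.range (c + 1), lbar b < ∑ b ∈ Finset.range (c + 1), mbar b :=
    Finset.sum_lt_sum hpt ⟨c, by simp, hstrict⟩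
  exact absurd (hdom1 c) (not_le.mpr hsum)

end Aux2


lemma uglov_core (e l : ℕ) (he : 0 < e) (k : Fin l → ℤ)
    (lam mu : MP l) (hlam : IsMP lam) (hmu : IsMP mu)
    (hgap : ∀ (m : ℕ) (h : m + 1 < l),
      (totalSize lam : ℤ) + e ≤ k ⟨m, Nat.lt_of_succ_lt h⟩ - k ⟨m + 1, h⟩)
    (lbar mbar : ℕ → ℕ)
    (hlbar : IsUglovBar e l k lam lbar) (hmbar : IsUglovBar e l k mu mbar)
    (hdom : PtnDom mbar lbar) (hlt : MPLexLt lam mu) : False := by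
  obtain ⟨m₀, hpre, a₀, heqa, hlt₀⟩ := hlt
  have hbl : beads e l k lam = Set.range fun b : ℕ => (∑ m, k m) + lbar b - b := hlbar.2.2
  have hbm : beads e l k mu = Set.range fun b : ℕ => (∑ m, k m) + mbar b - b := hmbar.2.2
  set K : ℤ := ∑ m, k m with hK
  set N : ℤ := (totalSize lam : ℤ) with hN
  have hN0 : 0 ≤ N := Int.ofNat_nonneg _
  have he' : (0:ℤ) < e := by exact_mod_cast he
  set nst : ℤ := k m₀ + mu m₀ a₀ - a₀ with hnst
  set ust : ℤ := uglovIdx e l m₀ nst with hust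
  have hmua : (lam m₀ a₀ : ℤ) < mu m₀ a₀ := by exact_mod_cast hlt₀
  have hust_mem : ust ∈ beads e l k mu := ⟨m₀, a₀, rfl⟩
  have hust_not : ust ∉ beads e l k lam := by
    rintro ⟨m, a, hma⟩
    rw [hust] at hma
    obtain ⟨hm, hn⟩ := uglov_inj he hma
    subst hm
    rw [hnst] at hn
    have hn' : (mu m₀ a₀ : ℤ) - a₀ = (lam m₀ a : ℤ) - a := by linarith
    rcases lt_trichotomy a a₀ with hc | hc | hc
    · have heq := heqa a hc
      have hcol := col_anti_lt (hmu.1 m₀) hc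
      rw [heq] at hn'
      linarith
    · subst hc
      linarith
    · have hcol := col_anti_le (hlam.1 m₀) hc.le
      linarith
  -- the set of differing indices
  obtain ⟨w, hwP, hwmax⟩ := Int.exists_greatest_of_bdd
    (P := fun x => (x ∈ beads e l k lam ∧ x ∉ beads e l k mu) ∨
      (x ∈ beads e l k mu ∧ x ∉ beads e l k lam))
    ⟨max (K + lbar 0) (K + mbar 0), by
      rintro x (⟨hx, -⟩ | ⟨hx, -⟩)
      · rw [hbl] at hx
        obtain ⟨b, hb⟩ := hx
        have h1 : (lbar b : ℤ) ≤ lbar 0 := by exact_mod_cast hlbar.1 (Nat.zero_le b)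
        have h2 : (0:ℤ) ≤ b := Int.ofNat_nonneg _
        have hb' : K + (lbar b : ℤ) - b = x := hb
        have : x ≤ K + lbar 0 := by rw [← hb']; linarith
        exact le_trans this (le_max_left _ _)
      · rw [hbm] at hx
        obtain ⟨b, hb⟩ := hx
        have h1 : (mbar b : ℤ) ≤ mbar 0 := by exact_mod_cast hmbar.1 (Nat.zero_le b)
        have h2 : (0:ℤ) ≤ b := Int.ofNat_nonneg _
        have hb' : K + (mbar b : ℤ) - b = x := hb
        have : x ≤ K + mbar 0 := by rw [← hb']; linarith
        exact le_trans this (le_max_right _ _)⟩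
    ⟨ust, Or.inr ⟨hust_mem, hust_not⟩⟩
  rcases hwP with ⟨hwl, hwm⟩ | ⟨hwm, hwl⟩
  · -- w is a bead of λ only
    obtain ⟨m₁, a₁, hw1⟩ := hwl
    set n₁ : ℤ := k m₁ + lam m₁ a₁ - a₁ with hn₁
    have hle : ust ≤ w := hwmax ust (Or.inr ⟨hust_mem, hust_not⟩)
    have hne : ust ≠ w := fun h => hwm (h ▸ hust_mem)
    have hlt' : ust < w := lt_of_le_of_ne hle hne
    rcases lt_trichotomy m₁.1 m₀.1 with hc | hc | hc
    · -- m₁ above m₀ : rows agree, so w ∈ beads μ, contradiction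
      have heqrow : lam m₁ = mu m₁ := hpre m₁ hc
      exact hwm ⟨m₁, a₁, by rw [hw1, hn₁, heqrow]⟩
    · -- same row
      have hm₁ : m₁ = m₀ := Fin.ext hc
      subst hm₁
      have hnlt : nst < n₁ := by
        rcases lt_trichotomy nst n₁ with h | h | h
        · exact h
        · exfalso; exact hne (by rw [hust, hw1, h])
        · exfalso
          have hmono := uglov_mono he m₁ h
          rw [← hw1, ← hust] at hmono
          linarith
      rcases Nat.lt_or_ge a₁ a₀ with hc' | hc'
      · exact hwm ⟨m₁, a₁, by rw [hw1, hn₁, heqa a₁ hc']⟩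
      · have hcol := col_anti_le (hlam.1 m₁) hc'
        rw [hnst, hn₁] at hnlt
        linarith
    · -- m₁ strictly below m₀ : the gap argument
      have hlt'' : uglovIdx e l m₀ nst < uglovIdx e l m₁ n₁ := by
        rw [← hust, ← hw1]; exact hlt'
      have hblock := uglov_block_mono he hc hlt''
      have e1 : (e:ℤ) * ((nst - 1) / e) + (nst - 1) % e = nst - 1 := Int.mul_ediv_add_emod _ _
      have e2 : (e:ℤ) * ((n₁ - 1) / e) + (n₁ - 1) % e = n₁ - 1 := Int.mul_ediv_add_emod _ _
      have b2 : (nst - 1) % (e:ℤ) < e := Int.emod_lt_of_pos _ he'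
      have b3 : 0 ≤ (n₁ - 1) % (e:ℤ) := Int.emod_nonneg _ (ne_of_gt he')
      have hmul : (e:ℤ) * ((nst - 1) / e) ≤ e * ((n₁ - 1) / e) :=
        mul_le_mul_of_nonneg_left hblock (le_of_lt he')
      have hn₁ge : nst - e + 1 ≤ n₁ := by linarith
      have hkgap : N + e ≤ k m₀ - k m₁ := gap_tele k (N + e) (by linarith) hgap hc
      have h1le : ∀ a < a₀, 1 ≤ lam m₀ a := by
        intro a ha
        have heq := heqa a ha
        have hmono : mu m₀ a₀ ≤ mu m₀ a := hmu.1 m₀ ha.le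
        omega
      have hmne : m₀ ≠ m₁ := fun h => by rw [h] at hc; exact lt_irrefl _ hc
      have hsz : (lam m₁ 0 : ℤ) + a₀ ≤ N := by
        have := size_lb lam hlam hmne a₀ h1le
        rw [hN]
        exact_mod_cast this
      have hcol : (lam m₁ a₁ : ℤ) - a₁ ≤ (lam m₁ 0 : ℤ) := by
        have := col_anti_le (hlam.1 m₁) (Nat.zero_le a₁)
        simpa using this
      rw [hnst] at hn₁ge
      rw [hn₁] at hn₁ge
      linarith
  · -- w is a bead of μ only : contradicts dominance
    apply dom_contra hlbar.1 hmbar.1 hdom.1 (K := K) (w := w)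
    · rw [hbm] at hwm
      obtain ⟨c, hc⟩ := hwm
      exact ⟨c, hc⟩
    · intro b hb
      apply hwl
      rw [hbl]
      exact ⟨b, hb⟩
    · intro b hb
      have hmem : (K + (lbar b : ℤ) - b) ∈ beads e l k lam := by
        rw [hbl]; exact ⟨b, rfl⟩
      have hmem2 : (K + (lbar b : ℤ) - b) ∈ beads e l k mu := by
        by_contra hno
        have := hwmax _ (Or.inl ⟨hmem, hno⟩)
        linarith
      rw [hbm] at hmem2
      obtain ⟨b', hb'⟩ := hmem2
      exact ⟨b', hb'⟩


/-- let `e > 0` and suppose the multicharge satisfies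
`k̃_m − k̃_{m+1} ≥ ht(α) + e` for `m = 1,…,l−1`.  Then for all `l`-multipartitions
`λ, μ` of content `α`, `μ > λ` in Uglov's order (i.e. `μ̄ ⊴ λ̄` in the dominance
order on the partitions associated via the inverse `(l,e)`-quotient map, with
`μ ≠ λ`) implies `μ <_lex λ` in the lexicographic order on multipartitions. -/
theorem uglov_order_implies_lex
    (e l : ℕ) (he : 0 < e) (k : Fin l → ℤ)
    (lam mu : MP l) (hlam : IsMP lam) (hmu : IsMP mu)
    -- λ and μ have the same content α, of height ht(α) = |λ|
    (hsize : totalSize mu = totalSize lam)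
    (hcont : ∀ i : ZMod e, resCont e k mu i = resCont e k lam i)
    -- the multicharge condition k̃_m − k̃_{m+1} ≥ ht(α) + e
    (hgap : ∀ (m : ℕ) (h : m + 1 < l),
      (totalSize lam : ℤ) + e ≤ k ⟨m, Nat.lt_of_succ_lt h⟩ - k ⟨m + 1, h⟩)
    -- the associated partitions λ̄ and μ̄
    (lbar mbar : ℕ → ℕ)
    (hlbar : IsUglovBar e l k lam lbar) (hmbar : IsUglovBar e l k mu mbar)
    -- μ > λ in Uglov's order
    (hdom : PtnDom mbar lbar) (hne : mu ≠ lam) :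
    MPLexLt mu lam := by
  rcases mp_trichotomy mu lam hne with h | h
  · exact h
  · exact (uglov_core e l he k lam mu hlam hmu hgap lbar mbar hlbar hmbar hdom h).elim
end

section
/- For any standard λ-tableau T with d = |λ| boxes, the degree statistic satisfies deg(T) + codeg(T) = def(cont(λ)), where def(α) = (Λ,α) − (α,α)/2. -/
open scoped Classical

/-- A standard tableau with `d` boxes is encoded by the sequence of rows
`boxes 0, …, boxes (d−1)` in which the entries `1, …, d` are successively placed;
`shape boxes r` is the multipartition formed by the first `r` entries. -/
def shape {l : ℕ} (boxes : ℕ → Fin l × ℕ) (r : ℕ) : MP l :=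
  fun m a => ((Finset.range r).filter fun s => boxes s = (m, a)).card

/-- Row `(m,a)` of `lam` has an addable node (at column `lam m a`). -/
def RowAddable {l : ℕ} (lam : MP l) (m : Fin l) (a : ℕ) : Prop :=
  a = 0 ∨ lam m a < lam m (a - 1)

/-- Row `(m,a)` of `lam` has a removable node. -/
def RowRemovable {l : ℕ} (lam : MP l) (m : Fin l) (a : ℕ) : Prop :=
  lam m (a + 1) < lam m a

/-- `boxes` encodes a standard tableau with `d` boxes: at each step the new box is
addable for the shape built so far. -/
def IsStandard {l : ℕ} (d : ℕ) (boxes : ℕ → Fin l × ℕ) : Prop :=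
  ∀ r < d, RowAddable (shape boxes r) (boxes r).1 (boxes r).2

/-- The residue of the box containing the entry `r + 1`. -/
def boxRes (e : ℕ) {l : ℕ} (k : Fin l → ℤ) (boxes : ℕ → Fin l × ℕ) (r : ℕ) :
    ZMod e :=
  ((k (boxes r).1 + (shape boxes r (boxes r).1 (boxes r).2 : ℤ) - (boxes r).2 : ℤ) :
    ZMod e)

/-- Residues of addable/removable nodes of `lam`. -/
def addRes (e : ℕ) {l : ℕ} (k : Fin l → ℤ) (lam : MP l) (m : Fin l) (a : ℕ) :
    ZMod e := ((k m + lam m a - a : ℤ) : ZMod e)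

def remRes (e : ℕ) {l : ℕ} (k : Fin l → ℤ) (lam : MP l) (m : Fin l) (a : ℕ) :
    ZMod e := ((k m + (lam m a - 1 : ℕ) - a : ℤ) : ZMod e)

/-- `(m,a)` is row-above `(m',a')`. -/
def rowLt {l : ℕ} (p q : Fin l × ℕ) : Prop :=
  p.1 < q.1 ∨ (p.1 = q.1 ∧ p.2 < q.2)

/-- `d_A(ν)` for a node `A` in row `p` of residue `i`: addable minus removable
`i`-nodes of `ν` strictly row-below `A`. -/
noncomputable def dBelow (e : ℕ) {l : ℕ} (k : Fin l → ℤ) (nu : MP l)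
    (p : Fin l × ℕ) (i : ZMod e) : ℤ :=
  (Set.ncard {x : Fin l × ℕ | rowLt p x ∧ RowAddable nu x.1 x.2 ∧
      addRes e k nu x.1 x.2 = i} : ℤ)
    - (Set.ncard {x : Fin l × ℕ | rowLt p x ∧ RowRemovable nu x.1 x.2 ∧
      remRes e k nu x.1 x.2 = i} : ℤ)

/-- `d^A(μ)` for a node `A` in row `p` of residue `i`: addable minus removable
`i`-nodes of `μ` strictly row-above `A`. -/
noncomputable def dAbove (e : ℕ) {l : ℕ} (k : Fin l → ℤ) (mu : MP l)
    (p : Fin l × ℕ) (i : ZMod e) : ℤ :=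
  (Set.ncard {x : Fin l × ℕ | rowLt x p ∧ RowAddable mu x.1 x.2 ∧
      addRes e k mu x.1 x.2 = i} : ℤ)
    - (Set.ncard {x : Fin l × ℕ | rowLt x p ∧ RowRemovable mu x.1 x.2 ∧
      remRes e k mu x.1 x.2 = i} : ℤ)

/-- `deg(T) = Σ_r d_{A_r}(λ^{(≤r)})`, where `A_r` is the box holding entry `r` and
`λ^{(≤r)}` is the shape after placing `1, …, r`. -/
noncomputable def degT (e : ℕ) {l : ℕ} (k : Fin l → ℤ) (d : ℕ)
    (boxes : ℕ → Fin l × ℕ) : ℤ :=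
  ∑ r ∈ Finset.range d,
    dBelow e k (shape boxes (r + 1)) (boxes r) (boxRes e k boxes r)

/-- `codeg(T) = Σ_r d^{A_r}(λ^{(≤r)} \ A_r)`. -/
noncomputable def codegT (e : ℕ) {l : ℕ} (k : Fin l → ℤ) (d : ℕ)
    (boxes : ℕ → Fin l × ℕ) : ℤ :=
  ∑ r ∈ Finset.range d,
    dAbove e k (shape boxes r) (boxes r) (boxRes e k boxes r)

/-- The Cartan matrix of type `A_∞` (`e = 0`) or `A_{e−1}^{(1)}` (`e ≥ 2`). -/
def cartan (e : ℕ) (i j : ZMod e) : ℤ :=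
  if i = j then 2
  else -(((if j = i + 1 then 1 else 0) + (if j = i - 1 then 1 else 0) : ℤ))

section AuxLemmas

open Finset

variable {l : ℕ}

lemma zmod_one_ne_zero {e : ℕ} (he : e ≠ 1) : (1 : ZMod e) ≠ 0 := by
  intro h
  have h2 : ((1 : ℕ) : ZMod e) = 0 := by exact_mod_cast h
  rw [ZMod.natCast_eq_zero_iff] at h2
  exact he (Nat.dvd_one.mp h2)

lemma zmod_succ_ne {e : ℕ} (he : e ≠ 1) (i : ZMod e) : i + 1 ≠ i := by
  intro h
  have : (1 : ZMod e) = 0 := by simpa using sub_eq_zero.mpr h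
  exact zmod_one_ne_zero he this

lemma zmod_pred_ne {e : ℕ} (he : e ≠ 1) (i : ZMod e) : i - 1 ≠ i := by
  intro h
  have h1 : (-1 : ZMod e) = 0 := by
    have := sub_eq_zero.mpr h
    simpa [sub_sub_cancel_left] using this
  have : (1 : ZMod e) = 0 := by
    have := neg_eq_zero.mp h1
    exact this
  exact zmod_one_ne_zero he this

/-- Add one box to a multipartition. -/
def addBox (μ : MP l) (p : Fin l × ℕ) : MP l := fun m a => μ m a + if p = (m, a) then 1 else 0

lemma addBox_self (μ : MP l) (m : Fin l) (a : ℕ) : addBox μ (m, a) m a = μ m a + 1 := by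
  simp [addBox]

lemma addBox_ne (μ : MP l) {p : Fin l × ℕ} {m : Fin l} {a : ℕ} (h : p ≠ (m, a)) :
    addBox μ p m a = μ m a := by
  simp [addBox, h]

lemma shape_succ (boxes : ℕ → Fin l × ℕ) (r : ℕ) :
    shape boxes (r + 1) = addBox (shape boxes r) (boxes r) := by
  funext m a
  unfold shape addBox
  rw [Finset.range_add_one, Finset.filter_insert]
  split_ifs with h
  · rw [Finset.card_insert_of_notMem (by simp)]
  · simp [h]

lemma shape_zero (boxes : ℕ → Fin l × ℕ) : shape boxes 0 = fun _ _ => 0 := by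
  funext m a; simp [shape]

/-- The local contribution of a row to `addable − removable` `j`-node counts. -/
noncomputable def gfun (e : ℕ) (k : Fin l → ℤ) (ν : MP l) (j : ZMod e) (x : Fin l × ℕ) : ℤ :=
  (if RowAddable ν x.1 x.2 ∧ addRes e k ν x.1 x.2 = j then 1 else 0)
    - (if RowRemovable ν x.1 x.2 ∧ remRes e k ν x.1 x.2 = j then 1 else 0)

lemma gfun_congr (e : ℕ) (k : Fin l → ℤ) (ν μ : MP l) (j : ZMod e) (x : Fin l × ℕ)
    (h1 : ν x.1 (x.2 - 1) = μ x.1 (x.2 - 1)) (h2 : ν x.1 x.2 = μ x.1 x.2)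
    (h3 : ν x.1 (x.2 + 1) = μ x.1 (x.2 + 1)) : gfun e k ν j x = gfun e k μ j x := by
  unfold gfun RowAddable RowRemovable addRes remRes
  rw [h1, h2, h3]

lemma addBox_mono (μ : MP l) (mono : ∀ m' a', μ m' (a' + 1) ≤ μ m' a') (m : Fin l) (a : ℕ)
    (hadd : RowAddable μ m a) (m' : Fin l) (a' : ℕ) :
    addBox μ (m, a) m' (a' + 1) ≤ addBox μ (m, a) m' a' := by
  unfold addBox
  by_cases h1 : (m, a) = (m', a' + 1)
  · injection h1 with hm ha
    subst hm; subst ha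
    have h2 : μ m (a' + 1) < μ m ((a' + 1) - 1) := by
      rcases hadd with h | h
      · omega
      · exact h
    simp only [Nat.add_sub_cancel] at h2
    have h3 : ((m : Fin l), a' + 1) ≠ (m, a') := by simp
    rw [if_pos rfl, if_neg h3]
    omega
  · by_cases h2 : (m, a) = (m', a')
    · rw [if_neg h1, if_pos h2]
      have := mono m' a'
      omega
    · rw [if_neg h1, if_neg h2]
      simpa using mono m' a'

lemma shape_mono (boxes : ℕ → Fin l × ℕ) :
    ∀ r, (∀ s < r, RowAddable (shape boxes s) (boxes s).1 (boxes s).2) →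
      ∀ m a, shape boxes r m (a + 1) ≤ shape boxes r m a := by
  intro r
  induction r with
  | zero => intro _ m a; simp [shape]
  | succ n ih =>
    intro h m a
    rw [shape_succ]
    have hadd : RowAddable (shape boxes n) (boxes n).1 (boxes n).2 := h n (Nat.lt_succ_self n)
    have := addBox_mono (shape boxes n) (ih fun s hs => h s (Nat.lt_succ_of_lt hs))
      (boxes n).1 (boxes n).2 hadd m a
    rwa [Prod.mk.eta] at this

end AuxLemmas

section AuxLemmas2

open Finset

variable {l : ℕ}

lemma shape_supp (boxes : ℕ → Fin l × ℕ) (d : ℕ) (b0 : ℕ)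
    (hb0 : ∀ s < d, (boxes s).2 + 1 < b0) (r : ℕ) (hr : r ≤ d) :
    ∀ m a, b0 ≤ a + 1 → shape boxes r m a = 0 := by
  intro m a ha
  unfold shape
  rw [Finset.card_eq_zero, Finset.filter_eq_empty_iff]
  intro s hs h
  rw [Finset.mem_range] at hs
  have := hb0 s (lt_of_lt_of_le hs hr)
  have h2 : (boxes s).2 = a := by rw [h]
  omega

lemma addable_mem (ν : MP l) (b0 : ℕ) (h0 : 0 < b0)
    (hsupp : ∀ m a, b0 ≤ a + 1 → ν m a = 0) (x : Fin l × ℕ)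
    (hx : RowAddable ν x.1 x.2) : x ∈ Finset.univ ×ˢ Finset.range b0 := by
  simp only [Finset.mem_product, Finset.mem_univ, Finset.mem_range, true_and]
  by_contra hc
  push_neg at hc
  rcases hx with h | h
  · omega
  · have h1 : ν x.1 x.2 = 0 := hsupp _ _ (by omega)
    have h2 : ν x.1 (x.2 - 1) = 0 := hsupp _ _ (by omega)
    omega

lemma removable_mem (ν : MP l) (b0 : ℕ)
    (hsupp : ∀ m a, b0 ≤ a + 1 → ν m a = 0) (x : Fin l × ℕ)
    (hx : RowRemovable ν x.1 x.2) : x ∈ Finset.univ ×ˢ Finset.range b0 := by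
  simp only [Finset.mem_product, Finset.mem_univ, Finset.mem_range, true_and]
  by_contra hc
  push_neg at hc
  have h1 : ν x.1 x.2 = 0 := hsupp _ _ (by omega)
  unfold RowRemovable at hx
  omega

lemma ncard_eq_filter_card (P : Fin l × ℕ → Prop) (T : Finset (Fin l × ℕ))
    (h : ∀ x, P x → x ∈ T) : Set.ncard {x | P x} = (T.filter P).card := by
  have heq : {x | P x} = ↑(T.filter P) := by
    ext x
    simp only [Finset.coe_filter, Set.mem_setOf_eq]
    exact ⟨fun hp => ⟨h x hp, hp⟩, fun hp => hp.2⟩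
  rw [heq, Set.ncard_coe_finset]

lemma dBelow_eq_sum (e : ℕ) (k : Fin l → ℤ) (ν : MP l) (p : Fin l × ℕ) (j : ZMod e)
    (T : Finset (Fin l × ℕ)) (hA : ∀ x, RowAddable ν x.1 x.2 → x ∈ T)
    (hR : ∀ x, RowRemovable ν x.1 x.2 → x ∈ T) :
    dBelow e k ν p j = ∑ x ∈ T.filter (fun x => rowLt p x), gfun e k ν j x := by
  unfold dBelow gfun
  rw [Finset.sum_sub_distrib, Finset.sum_boole, Finset.sum_boole,
    Finset.filter_filter, Finset.filter_filter,
    ncard_eq_filter_card _ T (fun x (hx : rowLt p x ∧ _) => hA x hx.2.1),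
    ncard_eq_filter_card _ T (fun x (hx : rowLt p x ∧ _) => hR x hx.2.1)]
  congr!

lemma dAbove_eq_sum (e : ℕ) (k : Fin l → ℤ) (ν : MP l) (p : Fin l × ℕ) (j : ZMod e)
    (T : Finset (Fin l × ℕ)) (hA : ∀ x, RowAddable ν x.1 x.2 → x ∈ T)
    (hR : ∀ x, RowRemovable ν x.1 x.2 → x ∈ T) :
    dAbove e k ν p j = ∑ x ∈ T.filter (fun x => rowLt x p), gfun e k ν j x := by
  unfold dAbove gfun
  rw [Finset.sum_sub_distrib, Finset.sum_boole, Finset.sum_boole,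
    Finset.filter_filter, Finset.filter_filter,
    ncard_eq_filter_card _ T (fun x (hx : rowLt x p ∧ _) => hA x hx.2.1),
    ncard_eq_filter_card _ T (fun x (hx : rowLt x p ∧ _) => hR x hx.2.1)]
  congr!

lemma rowLt_irrefl (p : Fin l × ℕ) : ¬ rowLt p p := by
  unfold rowLt; simp

lemma rowLt_asymm {p x : Fin l × ℕ} (h : rowLt p x) : ¬ rowLt x p := by
  unfold rowLt at *
  rcases h with h1 | ⟨h1e, h1l⟩ <;> rintro (h2 | ⟨h2e, h2l⟩)
  · exact absurd h1 (lt_asymm h2)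
  · exact absurd h1 (h2e ▸ lt_irrefl _)
  · exact absurd h2 (h1e ▸ lt_irrefl _)
  · omega

lemma rowLt_total {p x : Fin l × ℕ} (h : x ≠ p) (h2 : ¬ rowLt p x) : rowLt x p := by
  unfold rowLt at *
  rcases lt_trichotomy x.1 p.1 with h1 | h1 | h1
  · exact Or.inl h1
  · right
    refine ⟨h1, ?_⟩
    have hne : x.2 ≠ p.2 := fun hh => h (Prod.ext h1 hh)
    have hnl : ¬ p.2 < x.2 := fun hh => h2 (Or.inr ⟨h1.symm, hh⟩)
    omega
  · exact absurd (Or.inl h1) h2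

end AuxLemmas2

section AuxLemmas3

open Finset

variable {l : ℕ}

lemma gfun_mk (e : ℕ) (k : Fin l → ℤ) (ν : MP l) (j : ZMod e) (m : Fin l) (a : ℕ) :
    gfun e k ν j (m, a)
      = (if RowAddable ν m a ∧ addRes e k ν m a = j then 1 else 0)
        - (if RowRemovable ν m a ∧ remRes e k ν m a = j then 1 else 0) := rfl

lemma gfun_at_self (e : ℕ) (k : Fin l → ℤ) (μ : MP l)
    (mono : ∀ m' a', μ m' (a' + 1) ≤ μ m' a') (m : Fin l) (a : ℕ)
    (hadd : RowAddable μ m a) (j : ZMod e) :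
    gfun e k (addBox μ (m, a)) j (m, a) - gfun e k μ j (m, a)
      = (if (a = 0 ∨ μ m a + 1 < μ m (a - 1)) ∧ addRes e k μ m a + 1 = j then 1 else 0)
        - 2 * (if addRes e k μ m a = j then 1 else 0)
        + (if RowRemovable μ m a ∧ addRes e k μ m a - 1 = j then 1 else 0) := by
  have hν1 : addBox μ (m, a) m a = μ m a + 1 := addBox_self μ m a
  have hν2 : addBox μ (m, a) m (a + 1) = μ m (a + 1) :=
    addBox_ne μ (by intro h; injection h with h1 h2; omega)
  have hνadd : RowAddable (addBox μ (m, a)) m a ↔ (a = 0 ∨ μ m a + 1 < μ m (a - 1)) := by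
    unfold RowAddable
    rcases Nat.eq_zero_or_pos a with rfl | hpos
    · simp
    · have hν3 : addBox μ (m, a) m (a - 1) = μ m (a - 1) :=
        addBox_ne μ (by intro h; injection h with h1 h2; omega)
      rw [hν1, hν3]
  have hνrem : RowRemovable (addBox μ (m, a)) m a := by
    unfold RowRemovable; rw [hν1, hν2]; exact Nat.lt_succ_of_le (mono m a)
  have hres1 : addRes e k (addBox μ (m, a)) m a = addRes e k μ m a + 1 := by
    unfold addRes; rw [hν1]; push_cast; ring
  have hres2 : remRes e k (addBox μ (m, a)) m a = addRes e k μ m a := by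
    unfold remRes addRes; rw [hν1]; simp
  rw [gfun_mk, gfun_mk, hres1, hres2]
  simp only [hνadd, hνrem, hadd, true_and]
  by_cases hr : RowRemovable μ m a
  · have h1 : 1 ≤ μ m a := by unfold RowRemovable at hr; omega
    have hres3 : remRes e k μ m a = addRes e k μ m a - 1 := by
      unfold remRes addRes; push_cast [Nat.cast_sub h1]; ring
    simp only [hres3, hr, true_and]
    ring
  · simp only [hr, false_and, if_false]
    ring

lemma gfun_at_succ (e : ℕ) (k : Fin l → ℤ) (μ : MP l)
    (mono : ∀ m' a', μ m' (a' + 1) ≤ μ m' a') (m : Fin l) (a : ℕ) (j : ZMod e) :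
    gfun e k (addBox μ (m, a)) j (m, a + 1) - gfun e k μ j (m, a + 1)
      = (if μ m (a + 1) = μ m a ∧ addRes e k μ m a - 1 = j then 1 else 0) := by
  have hν1 : addBox μ (m, a) m a = μ m a + 1 := addBox_self μ m a
  have hν2 : addBox μ (m, a) m (a + 1) = μ m (a + 1) :=
    addBox_ne μ (by intro h; injection h with h1 h2; omega)
  have hν3 : addBox μ (m, a) m (a + 2) = μ m (a + 2) :=
    addBox_ne μ (by intro h; injection h with h1 h2; omega)
  have haddν : RowAddable (addBox μ (m, a)) m (a + 1) := by
    unfold RowAddable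
    right
    simp only [Nat.add_sub_cancel]
    rw [hν1, hν2]
    exact Nat.lt_succ_of_le (mono m a)
  have hremiff : RowRemovable (addBox μ (m, a)) m (a + 1) ↔ RowRemovable μ m (a + 1) := by
    unfold RowRemovable; rw [hν2, hν3]
  have hres_add : addRes e k (addBox μ (m, a)) m (a + 1) = addRes e k μ m (a + 1) := by
    unfold addRes; rw [hν2]
  have hres_rem : remRes e k (addBox μ (m, a)) m (a + 1) = remRes e k μ m (a + 1) := by
    unfold remRes; rw [hν2]
  have haddμiff : RowAddable μ m (a + 1) ↔ μ m (a + 1) < μ m a := by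
    unfold RowAddable
    simp only [Nat.add_sub_cancel]
    simp
  rw [gfun_mk, gfun_mk, hres_add, hres_rem]
  simp only [haddν, true_and, hremiff, haddμiff]
  rcases lt_or_eq_of_le (mono m a) with h | h
  · have hne : ¬ (μ m (a + 1) = μ m a) := by omega
    simp only [h, true_and, hne, false_and, if_false]
    ring
  · have hlt : ¬ (μ m (a + 1) < μ m a) := by omega
    have hres : addRes e k μ m (a + 1) = addRes e k μ m a - 1 := by
      unfold addRes; rw [h]; push_cast; ring
    simp only [hlt, false_and, if_false, hres, h, true_and]
    simp

lemma gfun_at_pred (e : ℕ) (k : Fin l → ℤ) (μ : MP l) (m : Fin l) (c : ℕ)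
    (hAC : μ m (c + 1) < μ m c) (j : ZMod e) :
    gfun e k (addBox μ (m, c + 1)) j (m, c) - gfun e k μ j (m, c)
      = (if μ m c = μ m (c + 1) + 1 ∧ addRes e k μ m (c + 1) + 1 = j then 1 else 0) := by
  have hν0 : addBox μ (m, c + 1) m c = μ m c :=
    addBox_ne μ (by intro h; injection h with h1 h2; omega)
  have hνm : addBox μ (m, c + 1) m (c - 1) = μ m (c - 1) :=
    addBox_ne μ (by intro h; injection h with h1 h2; omega)
  have hν1 : addBox μ (m, c + 1) m (c + 1) = μ m (c + 1) + 1 := addBox_self μ m (c + 1)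
  have haddiff : RowAddable (addBox μ (m, c + 1)) m c ↔ RowAddable μ m c := by
    unfold RowAddable; rw [hν0, hνm]
  have hresa : addRes e k (addBox μ (m, c + 1)) m c = addRes e k μ m c := by
    unfold addRes; rw [hν0]
  have hresr : remRes e k (addBox μ (m, c + 1)) m c = remRes e k μ m c := by
    unfold remRes; rw [hν0]
  have hremν : RowRemovable (addBox μ (m, c + 1)) m c ↔ μ m (c + 1) + 1 < μ m c := by
    unfold RowRemovable; rw [hν0, hν1]
  have hremμ : RowRemovable μ m c := hAC
  rw [gfun_mk, gfun_mk, hresa, hresr]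
  simp only [haddiff, hremν]
  rcases Nat.lt_or_ge (μ m (c + 1) + 1) (μ m c) with h | h
  · have hne : ¬ (μ m c = μ m (c + 1) + 1) := by omega
    simp only [h, hremμ, true_and, hne, false_and, if_false]
    ring
  · have heq : μ m c = μ m (c + 1) + 1 := by omega
    have hnl : ¬ (μ m (c + 1) + 1 < μ m c) := by omega
    have hres : remRes e k μ m c = addRes e k μ m (c + 1) + 1 := by
      unfold remRes addRes
      rw [heq]
      simp only [Nat.add_sub_cancel]
      push_cast
      ring
    simp only [hnl, false_and, if_false, hremμ, true_and, hres, heq]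
    simp

end AuxLemmas3

section AuxLemmas4

open Finset

variable {l : ℕ}

lemma neg_cartan (e : ℕ) (he : e ≠ 1) (i j : ZMod e) :
    (if i + 1 = j then (1 : ℤ) else 0) + (if i - 1 = j then 1 else 0)
        - 2 * (if i = j then 1 else 0) = - cartan e i j := by
  unfold cartan
  by_cases h : i = j
  · subst h
    rw [if_pos rfl, if_neg (zmod_succ_ne he i), if_neg (zmod_pred_ne he i)]
    simp
  · have h1 : (i + 1 = j) = (j = i + 1) := propext eq_comm
    have h2 : (i - 1 = j) = (j = i - 1) := propext eq_comm
    simp only [h1, h2, if_neg h]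
    ring

lemma cartan_symm (e : ℕ) (i j : ZMod e) : cartan e i j = cartan e j i := by
  unfold cartan
  by_cases h : i = j
  · simp [h]
  · rw [if_neg h, if_neg (Ne.symm h)]
    have h1 : (j = i + 1) = (i = j - 1) := by
      apply propext; constructor
      · rintro rfl; ring
      · rintro rfl; ring
    have h2 : (j = i - 1) = (i = j + 1) := by
      apply propext; constructor
      · rintro rfl; ring
      · rintro rfl; ring
    simp only [h1, h2]
    ring

lemma sum_gfun_delta (e : ℕ) (he : e ≠ 1) (k : Fin l → ℤ) (μ : MP l)
    (mono : ∀ m' a', μ m' (a' + 1) ≤ μ m' a') (m : Fin l) (a : ℕ)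
    (hadd : RowAddable μ m a) (j : ZMod e) (B : ℕ) (hB : a + 1 < B) :
    ∑ x ∈ Finset.univ ×ˢ Finset.range B, gfun e k (addBox μ (m, a)) j x
      = ∑ x ∈ Finset.univ ×ˢ Finset.range B, gfun e k μ j x
        - cartan e (addRes e k μ m a) j := by
  have hmain : ∑ x ∈ Finset.univ ×ˢ Finset.range B,
      (gfun e k (addBox μ (m, a)) j x - gfun e k μ j x)
      = - cartan e (addRes e k μ m a) j := by
    set s : Finset (Fin l × ℕ) := {(m, a - 1), (m, a), (m, a + 1)} with hs
    have hsub : s ⊆ Finset.univ ×ˢ Finset.range B := by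
      intro x hx
      simp only [hs, Finset.mem_insert, Finset.mem_singleton] at hx
      simp only [Finset.mem_product, Finset.mem_univ, Finset.mem_range, true_and]
      rcases hx with rfl | rfl | rfl <;> omega
    have hout : ∀ x ∈ Finset.univ ×ˢ Finset.range B, x ∉ s →
        gfun e k (addBox μ (m, a)) j x - gfun e k μ j x = 0 := by
      intro x _ hxs
      simp only [hs, Finset.mem_insert, Finset.mem_singleton, not_or] at hxs
      obtain ⟨hx1, hx2, hx3⟩ := hxs
      rw [sub_eq_zero]
      apply gfun_congr
      · apply addBox_ne
        intro h
        injection h with h1 h2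
        rcases Nat.eq_zero_or_pos x.2 with h0 | h0
        · apply hx2
          have : x = (x.1, x.2) := (Prod.mk.eta).symm
          rw [this, ← h1]
          ext <;> simp <;> omega
        · apply hx3
          have : x = (x.1, x.2) := (Prod.mk.eta).symm
          rw [this, ← h1]
          ext <;> simp <;> omega
      · apply addBox_ne
        intro h
        injection h with h1 h2
        apply hx2
        have : x = (x.1, x.2) := (Prod.mk.eta).symm
        rw [this, ← h1, ← h2]
      · apply addBox_ne
        intro h
        injection h with h1 h2
        apply hx1
        have : x = (x.1, x.2) := (Prod.mk.eta).symm
        rw [this, ← h1]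
        ext <;> simp <;> omega
    rw [← Finset.sum_subset hsub hout]
    rcases Nat.eq_zero_or_pos a with rfl | hpos
    · have hs0 : s = {(m, 0), (m, 1)} := by simp [hs]
      rw [hs0, Finset.sum_pair (by norm_num)]
      have h1 := gfun_at_self e k μ mono m 0 hadd j
      have h2 := gfun_at_succ e k μ mono m 0 j
      norm_num at h1 h2
      rw [h1, h2, ← neg_cartan e he]
      have hle : μ m 1 ≤ μ m 0 := by simpa using mono m 0
      rcases lt_or_eq_of_le hle with h | h
      · have hne : ¬ (μ m 1 = μ m 0) := by omega
        have hrem : RowRemovable μ m 0 := by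
          show μ m (0 + 1) < μ m 0
          simpa using h
        simp only [eq_false hne, false_and, if_false, eq_true hrem, true_and]
        split_ifs <;> ring
      · have hnr : ¬ RowRemovable μ m 0 := by
          intro hcon
          have h2 : μ m 1 < μ m 0 := hcon
          omega
        simp only [eq_false hnr, false_and, if_false, eq_true h, true_and]
        split_ifs <;> ring
    · obtain ⟨c, rfl⟩ : ∃ c, a = c + 1 := ⟨a - 1, by omega⟩
      have hAC : μ m (c + 1) < μ m c := by
        rcases hadd with h0 | hlt
        · omega
        · simpa using hlt
      have hs1 : s = insert (m, c) {(m, c + 1), (m, c + 1 + 1)} := by simp [hs]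
      rw [hs1, Finset.sum_insert (by
          intro hmem
          simp only [Finset.mem_insert, Finset.mem_singleton, Prod.mk.injEq] at hmem
          omega),
        Finset.sum_pair (by intro hh; injection hh with hh1 hh2; omega)]
      have h3 := gfun_at_pred e k μ m c hAC j
      have h1 := gfun_at_self e k μ mono m (c + 1) hadd j
      have h2 := gfun_at_succ e k μ mono m (c + 1) j
      norm_num at h1 h2 h3
      rw [h3, h1, h2, ← neg_cartan e he]
      have hle : μ m (c + 1) + 1 ≤ μ m c := hAC
      have hle' : μ m (c + 1 + 1) ≤ μ m (c + 1) := mono m (c + 1)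
      rcases lt_or_eq_of_le hle with h | h
      · have hne : ¬ (μ m c = μ m (c + 1) + 1) := by omega
        rcases lt_or_eq_of_le hle' with h' | h'
        · have hrem : RowRemovable μ m (c + 1) := h'
          have hne' : ¬ (μ m (c + 1 + 1) = μ m (c + 1)) := by omega
          simp only [eq_false hne, false_and, if_false, eq_true h, eq_true hrem,
            true_and, eq_false hne']
          split_ifs <;> ring
        · have hnr : ¬ RowRemovable μ m (c + 1) := by
            intro hcon
            have : μ m (c + 1 + 1) < μ m (c + 1) := hcon
            omega
          simp only [eq_false hne, eq_false hnr, false_and, if_false, eq_true h,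
            eq_true h', true_and]
          split_ifs <;> ring
      · have heq : μ m c = μ m (c + 1) + 1 := h.symm
        have hnl : ¬ (μ m (c + 1) + 1 < μ m c) := by omega
        rcases lt_or_eq_of_le hle' with h' | h'
        · have hrem : RowRemovable μ m (c + 1) := h'
          have hne' : ¬ (μ m (c + 1 + 1) = μ m (c + 1)) := by omega
          simp only [eq_false hnl, false_and, if_false, eq_true heq, eq_true hrem,
            true_and, eq_false hne']
          split_ifs <;> ring
        · have hnr : ¬ RowRemovable μ m (c + 1) := by
            intro hcon
            have : μ m (c + 1 + 1) < μ m (c + 1) := hcon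
            omega
          simp only [eq_false hnl, eq_false hnr, false_and, if_false, eq_true heq,
            eq_true h', true_and]
          split_ifs <;> ring
  rw [Finset.sum_sub_distrib] at hmain
  linarith [hmain]

end AuxLemmas4

section AuxLemmas5

open Finset

variable {l : ℕ}

lemma N_formula (e : ℕ) (he : e ≠ 1) (k : Fin l → ℤ) (d : ℕ) (boxes : ℕ → Fin l × ℕ)
    (hstd : IsStandard d boxes) (b0 : ℕ) (h0 : 0 < b0)
    (hb0 : ∀ s < d, (boxes s).2 + 1 < b0) :
    ∀ r ≤ d, ∀ j : ZMod e,
      ∑ x ∈ Finset.univ ×ˢ Finset.range b0, gfun e k (shape boxes r) j x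
        = ((Finset.univ.filter fun m : Fin l => ((k m : ZMod e) = j)).card : ℤ)
          - ∑ s ∈ Finset.range r, cartan e (boxRes e k boxes s) j := by
  intro r
  induction r with
  | zero =>
    intro _ j
    rw [shape_zero]
    simp only [Finset.range_zero, Finset.sum_empty, sub_zero]
    rw [Finset.sum_product]
    have hrow : ∀ m : Fin l, ∑ a ∈ Finset.range b0, gfun e k (fun _ _ => 0) j (m, a)
        = if ((k m : ZMod e) = j) then 1 else 0 := by
      intro m
      have hterm : ∀ a ∈ Finset.range b0, gfun e k (fun _ _ => 0) j (m, a)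
          = if a = 0 then (if ((k m : ZMod e) = j) then 1 else 0) else 0 := by
        intro a _
        rw [gfun_mk]
        unfold RowAddable RowRemovable addRes remRes
        simp only [lt_irrefl, or_false, false_and, if_false, sub_zero]
        rcases Nat.eq_zero_or_pos a with rfl | hpos
        · norm_num
        · have hna : ¬ (a = 0) := by omega
          simp [hna]
      rw [Finset.sum_congr rfl hterm, Finset.sum_ite_eq' (Finset.range b0) 0]
      simp [Finset.mem_range, h0]
    rw [Finset.sum_congr rfl (fun m _ => hrow m), Finset.sum_boole]
  | succ n ih =>
    intro hr j
    rw [Finset.sum_range_succ, shape_succ]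
    have hmono := shape_mono boxes n (fun s hs => hstd s (by omega))
    have hadd : RowAddable (shape boxes n) (boxes n).1 (boxes n).2 := hstd n (by omega)
    have hdelta := sum_gfun_delta e he k (shape boxes n) hmono (boxes n).1 (boxes n).2
      hadd j b0 (hb0 n (by omega))
    rw [Prod.mk.eta] at hdelta
    rw [hdelta, ih (by omega) j]
    have hres : boxRes e k boxes n = addRes e k (shape boxes n) (boxes n).1 (boxes n).2 := rfl
    rw [hres]
    ring

lemma step_eq (e : ℕ) (he : e ≠ 1) (k : Fin l → ℤ) (μ : MP l)
    (mono : ∀ m' a', μ m' (a' + 1) ≤ μ m' a') (m : Fin l) (a : ℕ)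
    (hadd : RowAddable μ m a) (b0 : ℕ) (hb : a + 1 < b0)
    (hsupp : ∀ m' a', b0 ≤ a' + 1 → μ m' a' = 0) :
    dBelow e k (addBox μ (m, a)) (m, a) (addRes e k μ m a)
        + dAbove e k μ (m, a) (addRes e k μ m a)
      = (∑ x ∈ Finset.univ ×ˢ Finset.range b0, gfun e k μ (addRes e k μ m a) x) - 1 := by
  have h0 : 0 < b0 := by omega
  have hsuppν : ∀ m' a', b0 ≤ a' + 1 → addBox μ (m, a) m' a' = 0 := by
    intro m' a' ha'
    unfold addBox
    rw [hsupp m' a' ha']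
    have : (m, a) ≠ (m', a') := by
      intro h; injection h with h1 h2; omega
    simp [this]
  set T := (Finset.univ : Finset (Fin l)) ×ˢ Finset.range b0 with hT
  set i := addRes e k μ m a with hi
  rw [dBelow_eq_sum e k _ _ _ T (addable_mem _ b0 h0 hsuppν) (removable_mem _ b0 hsuppν),
    dAbove_eq_sum e k _ _ _ T (addable_mem _ b0 h0 hsupp) (removable_mem _ b0 hsupp)]
  have hbelow : ∀ x ∈ T.filter (fun x => rowLt (m, a) x),
      gfun e k (addBox μ (m, a)) i x = gfun e k μ i x := by
    intro x hx
    rw [Finset.mem_filter] at hx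
    obtain ⟨hxT, hlt⟩ := hx
    by_cases hxe : x = (m, a + 1)
    · subst hxe
      have := gfun_at_succ e k μ mono m a i
      rw [sub_eq_iff_eq_add] at this
      rw [this]
      have hne : ¬ (i - 1 = i) := zmod_pred_ne he i
      simp [hne]
      exact fun _ h => hne h
    · apply gfun_congr
      · apply addBox_ne
        intro h
        injection h with h1 h2
        rcases hlt with hl | ⟨hl1, hl2⟩
        · rw [h1] at hl; exact absurd hl (lt_irrefl _)
        · apply hxe
          have hx2 : x.2 = a + 1 := by omega
          rw [← Prod.mk.eta (p := x), ← hl1, hx2]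
      · apply addBox_ne
        intro h
        injection h with h1 h2
        rcases hlt with hl | ⟨hl1, hl2⟩
        · rw [h1] at hl; exact absurd hl (lt_irrefl _)
        · omega
      · apply addBox_ne
        intro h
        injection h with h1 h2
        rcases hlt with hl | ⟨hl1, hl2⟩
        · rw [h1] at hl; exact absurd hl (lt_irrefl _)
        · omega
  rw [Finset.sum_congr rfl hbelow]
  have hmem : (m, a) ∈ T := by
    simp only [hT, Finset.mem_product, Finset.mem_univ, Finset.mem_range, true_and]
    omega
  have hval : gfun e k μ i (m, a) = 1 := by
    rw [gfun_mk]
    rw [if_pos ⟨hadd, rfl⟩]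
    have hneg : ¬ (RowRemovable μ m a ∧ remRes e k μ m a = i) := by
      rintro ⟨hr, hres⟩
      have h1 : 1 ≤ μ m a := by unfold RowRemovable at hr; omega
      have : remRes e k μ m a = i - 1 := by
        rw [hi]
        unfold remRes addRes
        push_cast [Nat.cast_sub h1]
        ring
      rw [this] at hres
      exact zmod_pred_ne he i hres
    rw [if_neg hneg]
    ring
  have hsplit : ∑ x ∈ T.filter (fun x => rowLt (m, a) x), gfun e k μ i x
      + ∑ x ∈ T.filter (fun x => rowLt x (m, a)), gfun e k μ i x
      = ∑ x ∈ T, gfun e k μ i x - gfun e k μ i (m, a) := by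
    rw [← Finset.sum_erase_add T _ hmem]
    have h1 : T.filter (fun x => rowLt (m, a) x)
        = (T.erase (m, a)).filter (fun x => rowLt (m, a) x) := by
      ext x
      simp only [Finset.mem_filter, Finset.mem_erase]
      constructor
      · rintro ⟨hxT, hlt⟩
        exact ⟨⟨fun hc => rowLt_irrefl (m, a) (hc ▸ hlt), hxT⟩, hlt⟩
      · rintro ⟨⟨_, hxT⟩, hlt⟩
        exact ⟨hxT, hlt⟩
    have h2 : T.filter (fun x => rowLt x (m, a))
        = (T.erase (m, a)).filter (fun x => ¬ rowLt (m, a) x) := by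
      ext x
      simp only [Finset.mem_filter, Finset.mem_erase]
      constructor
      · rintro ⟨hxT, hlt⟩
        exact ⟨⟨fun hc => rowLt_irrefl (m, a) (hc ▸ hlt), hxT⟩, rowLt_asymm hlt⟩
      · rintro ⟨⟨hne, hxT⟩, hnlt⟩
        exact ⟨hxT, rowLt_total hne hnlt⟩
    rw [h1, h2, Finset.sum_filter_add_sum_filter_not]
    ring
  rw [hsplit, hval]

lemma double_sum (f : ℕ → ℕ → ℤ) (hsym : ∀ r s, f r s = f s r) (hdiag : ∀ r, f r r = 2) :
    ∀ d, ∑ r ∈ Finset.range d, ∑ s ∈ Finset.range d, f r s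
      = 2 * ∑ r ∈ Finset.range d, (1 + ∑ s ∈ Finset.range r, f s r) := by
  intro d
  induction d with
  | zero => simp
  | succ n ih =>
    rw [Finset.sum_range_succ (f := fun r => ∑ s ∈ Finset.range (n + 1), f r s),
      Finset.sum_range_succ (f := fun r => (1 + ∑ s ∈ Finset.range r, f s r)),
      Finset.sum_congr rfl (fun r (_ : r ∈ Finset.range n) => Finset.sum_range_succ (f r) n),
      Finset.sum_add_distrib, ih, Finset.sum_range_succ (f n) n, hdiag n,
      Finset.sum_congr rfl (fun s (_ : s ∈ Finset.range n) => hsym n s)]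
    ring

end AuxLemmas5

/-- for any standard `λ`-tableau `T` with `d = |λ|` boxes, the degree
statistic satisfies `deg(T) + codeg(T) = def(cont(λ))`, where
`def(α) = (Λ,α) − (α,α)/2`.  Here `(Λ,α) = Σ_r #{m | k_m ≡ res(A_r)}` and
`(α,α) = Σ_{r,s} a_{res(A_r),res(A_s)}` for the boxes `A_1,…,A_d` of `T`. -/
theorem deg_add_codeg_eq_defect
    (e l : ℕ) (he : e ≠ 1) (k : Fin l → ℤ) (d : ℕ) (boxes : ℕ → Fin l × ℕ)
    (hstd : IsStandard d boxes) :
    degT e k d boxes + codegT e k d boxes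
      = (∑ r ∈ Finset.range d,
          ((Finset.univ.filter fun m : Fin l =>
            ((k m : ZMod e) = boxRes e k boxes r)).card : ℤ))
        - (∑ r ∈ Finset.range d, ∑ s ∈ Finset.range d,
            cartan e (boxRes e k boxes r) (boxRes e k boxes s)) / 2 := by
  unfold degT codegT
  rw [← Finset.sum_add_distrib]
  set b0 := ((Finset.range d).sup fun s => (boxes s).2) + 2 with hb0def
  have h0 : 0 < b0 := by omega
  have hb0 : ∀ s < d, (boxes s).2 + 1 < b0 := by
    intro s hs
    have h1 := Finset.le_sup (f := fun t => (boxes t).2) (Finset.mem_range.mpr hs)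
    have h2 : (boxes s).2 ≤ (Finset.range d).sup fun t => (boxes t).2 := h1
    omega
  have hterm : ∀ r ∈ Finset.range d,
      dBelow e k (shape boxes (r + 1)) (boxes r) (boxRes e k boxes r)
        + dAbove e k (shape boxes r) (boxes r) (boxRes e k boxes r)
      = ((Finset.univ.filter fun m : Fin l =>
            ((k m : ZMod e) = boxRes e k boxes r)).card : ℤ)
        - (1 + ∑ s ∈ Finset.range r, cartan e (boxRes e k boxes s) (boxRes e k boxes r)) := by
    intro r hr
    rw [Finset.mem_range] at hr
    have hmono := shape_mono boxes r (fun s hs => hstd s (by omega))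
    have hadd := hstd r hr
    have hsupp := shape_supp boxes d b0 hb0 r (le_of_lt hr)
    have hstep := step_eq e he k (shape boxes r) hmono (boxes r).1 (boxes r).2 hadd
      b0 (hb0 r hr) hsupp
    rw [Prod.mk.eta] at hstep
    have hres : addRes e k (shape boxes r) (boxes r).1 (boxes r).2 = boxRes e k boxes r := rfl
    rw [hres] at hstep
    rw [shape_succ, hstep,
      N_formula e he k d boxes hstd b0 h0 hb0 r (le_of_lt hr) (boxRes e k boxes r)]
    ring
  rw [Finset.sum_congr rfl hterm]
  have hpair := double_sum (fun r s => cartan e (boxRes e k boxes r) (boxRes e k boxes s))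
    (fun r s => cartan_symm e _ _) (fun r => by simp [cartan]) d
  rw [hpair, Int.mul_ediv_cancel_left _ (by norm_num : (2 : ℤ) ≠ 0),
    ← Finset.sum_sub_distrib]
end
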